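/- arXiv:1901.01393 — 2 statements merged into one kernel-verified Lean document; each statement's English description precedes it below -/
import Mathlib

section
/- Let V be a finite-dimensional vector space over the field 𝔽₂ with two elements, equipped with a nondegenerate alternating bilinear form b (so dim V = 2g for some g), and let μ : V → 𝔽₂ be a quadratic refinement of b, i.e., μ(x + y) = μ(x) + μ(y) + b(x, y) for all x, y ∈ V. If there exists a symplectic basis e₁, …, e_g, f₁, …, f_g of V with Σᵢ μ(eᵢ)μ(fᵢ) = 0 in 𝔽₂ (i.e., the Arf invariant of μ vanishes), then there exists a symplectic basis e₁′, …, e_g′, f₁′, …, f_g′ of V such that μ(eᵢ′) = 0 for all i = 1, …, g. -/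
/-- `e₁, …, e_g, f₁, …, f_g` is a symplectic basis for the bilinear form `b` on the
`𝔽₂`-vector space `V`: it is a basis of `V` with `b (eᵢ) (eⱼ) = 0`, `b (fᵢ) (fⱼ) = 0` and
`b (eᵢ) (fⱼ) = δᵢⱼ`. -/
def IsSymplecticBasis {V : Type*} [AddCommGroup V] [Module (ZMod 2) V]
    (b : V →ₗ[ZMod 2] V →ₗ[ZMod 2] ZMod 2) (g : ℕ) (e f : Fin g → V) : Prop :=
  (∀ i j, b (e i) (e j) = 0) ∧ (∀ i j, b (f i) (f j) = 0) ∧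
  (∀ i j, b (e i) (f j) = if i = j then 1 else 0) ∧
  ∃ B : Module.Basis (Fin g ⊕ Fin g) (ZMod 2) V,
    (∀ i, B (Sum.inl i) = e i) ∧ (∀ i, B (Sum.inr i) = f i)

lemma zmod2_eq_zero_of_ne_one {x : ZMod 2} (h : x ≠ 1) : x = 0 := by revert h; revert x; decide

lemma zmod2_add_eq (a : ZMod 2) (x : ZMod 2) (h : a + x = 0) : a = x := by revert h; revert a x; decide

section Aux
variable {V : Type*} [AddCommGroup V] [Module (ZMod 2) V]
  {b : V →ₗ[ZMod 2] V →ₗ[ZMod 2] ZMod 2}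

lemma b_symm (halt : ∀ x, b x x = 0) (x y : V) : b x y = b y x := by
  have h := halt (x + y)
  simp only [map_add, LinearMap.add_apply, halt x, halt y] at h
  have h2 : b x y + b y x = 0 := by linear_combination h
  exact zmod2_add_eq _ _ h2

lemma vadd_self (x : V) : x + x = 0 := by
  have h : ((1 : ZMod 2) + 1) • x = x + x := by rw [add_smul, one_smul]
  have h2 : ((1:ZMod 2)+1) = 0 := by decide
  rw [h2, zero_smul] at h; exact h.symm

lemma isSymplecticBasis_of_span {g : ℕ} {e f : Fin g → V}
    (halt : ∀ x, b x x = 0)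
    (hee : ∀ i j, b (e i) (e j) = 0) (hff : ∀ i j, b (f i) (f j) = 0)
    (hef : ∀ i j, b (e i) (f j) = if i = j then 1 else 0)
    (hspan : ⊤ ≤ Submodule.span (ZMod 2) (Set.range (Sum.elim e f))) :
    IsSymplecticBasis b g e f := by
  have hli : LinearIndependent (ZMod 2) (Sum.elim e f) := by
    rw [Fintype.linearIndependent_iff]
    intro c hc s
    have key : ∀ w : V, b (∑ i : Fin g ⊕ Fin g, c i • Sum.elim e f i) w = 0 := by
      intro w; rw [hc]; simp
    rcases s with j | j
    · have h := key (f j)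
      rw [map_sum] at h
      simp only [LinearMap.sum_apply, map_smul, LinearMap.smul_apply] at h
      rw [Fintype.sum_sum_type] at h
      simp only [Sum.elim_inl, Sum.elim_inr, hef, hff] at h
      simpa using h
    · have h := key (e j)
      rw [map_sum] at h
      simp only [LinearMap.sum_apply, map_smul, LinearMap.smul_apply] at h
      rw [Fintype.sum_sum_type] at h
      have hfe : ∀ i k, b (f i) (e k) = if k = i then 1 else 0 := by
        intro i k; rw [b_symm halt, hef]
      simp only [Sum.elim_inl, Sum.elim_inr, hee, hfe, halt] at h
      simpa using h
  refine ⟨hee, hff, hef, Module.Basis.mk hli hspan, fun i => ?_, fun i => ?_⟩ <;>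
    simp [Module.Basis.mk_apply]

lemma span_of_isSymplecticBasis {g : ℕ} {e f : Fin g → V}
    (h : IsSymplecticBasis b g e f) :
    ⊤ ≤ Submodule.span (ZMod 2) (Set.range (Sum.elim e f)) := by
  obtain ⟨-, -, -, B, hBe, hBf⟩ := h
  have heq : ⇑B = Sum.elim e f := by
    funext s; rcases s with i | i <;> simp [hBe, hBf]
  rw [← heq, B.span_eq]

lemma hone : (1 : ZMod 2) + 1 = 0 := by decide
end Aux

open Finset

section Key
variable {V : Type*} [AddCommGroup V] [Module (ZMod 2) V]
  {b : V →ₗ[ZMod 2] V →ₗ[ZMod 2] ZMod 2}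

lemma key (halt : ∀ x, b x x = 0) {μ : V → ZMod 2}
    (hμ : ∀ x y, μ (x + y) = μ x + μ y + b x y) {g : ℕ} :
    ∀ n (e f : Fin g → V), IsSymplecticBasis b g e f →
      (Finset.univ.filter fun k => μ (e k) = 1 ∧ μ (f k) = 1).card = n →
      (n : ZMod 2) = 0 →
      ∃ e' f', IsSymplecticBasis b g e' f' ∧ ∀ i, μ (e' i) = 0 := by
  intro n
  induction n using Nat.strong_induction_on with
  | _ n ih =>
  intro e f hbasis hcard hn
  obtain ⟨hee, hff, hef, hB⟩ := hbasis
  have hfe : ∀ i j, b (f i) (e j) = if j = i then 1 else 0 := by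
    intro i j; rw [b_symm halt, hef]
  rcases Nat.eq_zero_or_pos n with hn0 | hpos
  · -- no bad indices: swap within pairs
    subst hn0
    have hgood : ∀ k, ¬(μ (e k) = 1 ∧ μ (f k) = 1) := by
      intro k hk
      have : k ∈ Finset.univ.filter fun k => μ (e k) = 1 ∧ μ (f k) = 1 := by
        simp [hk.1, hk.2]
      rw [Finset.card_eq_zero] at hcard
      simp [hcard] at this
    classical
    set e' : Fin g → V := fun k => if μ (e k) = 1 then f k else e k with he'
    set f' : Fin g → V := fun k => if μ (e k) = 1 then e k else f k with hf'
    refine ⟨e', f', isSymplecticBasis_of_span halt ?_ ?_ ?_ ?_, ?_⟩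
    · intro i j; simp only [he']
      split_ifs with h1 h2 h2
      · exact hff i j
      · rw [hfe, if_neg]; intro h; subst h; exact h2 h1
      · rw [hef, if_neg]; intro h; subst h; exact h1 h2
      · exact hee i j
    · intro i j; simp only [hf']
      split_ifs with h1 h2 h2
      · exact hee i j
      · rw [hef, if_neg]; intro h; subst h; exact h2 h1
      · rw [hfe, if_neg]; intro h; subst h; exact h1 h2
      · exact hff i j
    · intro i j; simp only [he', hf']
      by_cases hij : i = j
      · subst hij
        by_cases h : μ (e i) = 1 <;> simp [h, hfe, hef]
      · have hji' : ¬ j = i := fun h => hij h.symm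
        rw [if_neg hij]
        by_cases h1 : μ (e i) = 1 <;> by_cases h2 : μ (e j) = 1 <;>
          simp [h1, h2, hfe, hff, hee, hef, hij, hji']
    · refine le_trans (span_of_isSymplecticBasis ⟨hee, hff, hef, hB⟩)
        (Submodule.span_le.mpr ?_)
      rintro x ⟨s, rfl⟩
      rcases s with k | k
      · by_cases h : μ (e k) = 1
        · exact Submodule.subset_span ⟨Sum.inr k, by simp [hf', h]⟩
        · exact Submodule.subset_span ⟨Sum.inl k, by simp [he', h]⟩
      · by_cases h : μ (e k) = 1
        · exact Submodule.subset_span ⟨Sum.inl k, by simp [he', h]⟩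
        · exact Submodule.subset_span ⟨Sum.inr k, by simp [hf', h]⟩
    · intro i; simp only [he']
      by_cases h : μ (e i) = 1
      · rw [if_pos h]; exact zmod2_eq_zero_of_ne_one fun h1 => hgood i ⟨h, h1⟩
      · rw [if_neg h]; exact zmod2_eq_zero_of_ne_one h
  · -- n > 0 : there are bad indices; pick two and fix them
    classical
    set Bad := Finset.univ.filter fun k => μ (e k) = 1 ∧ μ (f k) = 1 with hBad
    have hB2 : 2 ≤ n := by
      by_contra hlt
      push_neg at hlt
      have hn1 : n = 1 := by omega
      subst hn1
      rw [Nat.cast_one] at hn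
      exact one_ne_zero hn
    obtain ⟨i, hi⟩ := Finset.card_pos.mp (by omega : 0 < Bad.card)
    obtain ⟨j, hj⟩ := Finset.card_pos.mp
      (by rw [Finset.card_erase_of_mem hi]; omega : 0 < (Bad.erase i).card)
    have hji : j ≠ i := (Finset.mem_erase.mp hj).1
    have hjB : j ∈ Bad := (Finset.mem_erase.mp hj).2
    have hij : i ≠ j := hji.symm
    have hμei : μ (e i) = 1 := ((Finset.mem_filter.mp hi).2).1
    have hμfi : μ (f i) = 1 := ((Finset.mem_filter.mp hi).2).2
    have hμej : μ (e j) = 1 := ((Finset.mem_filter.mp hjB).2).1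
    have hμfj : μ (f j) = 1 := ((Finset.mem_filter.mp hjB).2).2
    set e₂ : Fin g → V := fun k =>
      if k = i then e i + e j else if k = j then f i + f j else e k with he₂
    set f₂ : Fin g → V := fun k =>
      if k = i then f i else if k = j then e j else f k with hf₂
    have he₂i : e₂ i = e i + e j := by simp [he₂]
    have he₂j : e₂ j = f i + f j := by simp [he₂, hji]
    have hμe₂i : μ (e₂ i) = 0 := by
      rw [he₂i, hμ, hμei, hμej, hee]; decide
    have hμe₂j : μ (e₂ j) = 0 := by
      rw [he₂j, hμ, hμfi, hμfj, hff]; decide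
    have hf₂i : f₂ i = f i := by simp [hf₂]
    have hf₂j : f₂ j = e j := by simp [hf₂, hji]
    have E : ∀ k, k ≠ i → k ≠ j → e₂ k = e k := by
      intro k h1 h2; simp [he₂, h1, h2]
    have F : ∀ k, k ≠ i → k ≠ j → f₂ k = f k := by
      intro k h1 h2; simp [hf₂, h1, h2]
    have cases3 : ∀ m : Fin g, m = i ∨ m = j ∨ (m ≠ i ∧ m ≠ j) := by
      intro m
      by_cases h1 : m = i
      · exact Or.inl h1
      by_cases h2 : m = j
      · exact Or.inr (Or.inl h2)
      exact Or.inr (Or.inr ⟨h1, h2⟩)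
    have bexp : ∀ x y z w : V, b (x + y) (z + w) = b x z + b x w + b y z + b y w := by
      intro x y z w
      simp only [map_add, LinearMap.add_apply]
      ring
    have hbasis₂ : IsSymplecticBasis b g e₂ f₂ := by
      refine isSymplecticBasis_of_span halt ?_ ?_ ?_ ?_
      · intro k l
        rcases cases3 k with hk | hk | ⟨hk1, hk2⟩ <;>
          rcases cases3 l with hl | hl | ⟨hl1, hl2⟩
        · rw [hk, hl, he₂i]; exact halt _
        · rw [hk, hl, he₂i, he₂j, bexp]; simp [hef, hij, hji, hone]
        · rw [hk, he₂i, E l hl1 hl2]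
          simp [map_add, hee]
        · rw [hk, hl, he₂j, he₂i, bexp]; simp [hfe, hij, hji, hone]
        · rw [hk, hl, he₂j]; exact halt _
        · rw [hk, he₂j, E l hl1 hl2]
          simp [map_add, hfe, hl1, hl2]
        · rw [hl, E k hk1 hk2, he₂i]
          simp [map_add, hee]
        · rw [hl, E k hk1 hk2, he₂j]
          simp [map_add, hef, hk1, hk2]
        · rw [E k hk1 hk2, E l hl1 hl2]; exact hee k l
      · intro k l
        rcases cases3 k with hk | hk | ⟨hk1, hk2⟩ <;>
          rcases cases3 l with hl | hl | ⟨hl1, hl2⟩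
        · rw [hk, hl, hf₂i]; exact hff i i
        · rw [hk, hl, hf₂i, hf₂j]; simp [hfe, hji]
        · rw [hk, hf₂i, F l hl1 hl2]; exact hff i l
        · rw [hk, hl, hf₂j, hf₂i]; simp [hef, hji]
        · rw [hk, hl, hf₂j]; exact hee j j
        · rw [hk, hf₂j, F l hl1 hl2, hef, if_neg (fun h => hl2 h.symm)]
        · rw [hl, F k hk1 hk2, hf₂i]; exact hff k i
        · rw [hl, F k hk1 hk2, hf₂j, hfe, if_neg (fun h => hk2 h.symm)]
        · rw [F k hk1 hk2, F l hl1 hl2]; exact hff k l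
      · intro k l
        rcases cases3 k with hk | hk | ⟨hk1, hk2⟩ <;>
          rcases cases3 l with hl | hl | ⟨hl1, hl2⟩
        · rw [hk, hl, he₂i, hf₂i]; simp [map_add, hef, hji]
        · rw [hk, hl, he₂i, hf₂j]; simp [map_add, hee, hij]
        · rw [hk, he₂i, F l hl1 hl2]
          simp [map_add, hef, hl1.symm, hl2.symm]
        · rw [hk, hl, he₂j, hf₂i]; simp [map_add, hff, hji]
        · rw [hk, hl, he₂j, hf₂j]; simp [map_add, hfe, hji]
        · rw [hk, he₂j, F l hl1 hl2]
          simp [map_add, hff, hl2.symm]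
        · rw [hl, E k hk1 hk2, hf₂i]; simp [hef, hk1]
        · rw [hl, E k hk1 hk2, hf₂j]; simp [hee, hk2]
        · rw [E k hk1 hk2, F l hl1 hl2]; exact hef k l
      · refine le_trans (span_of_isSymplecticBasis ⟨hee, hff, hef, hB⟩)
          (Submodule.span_le.mpr ?_)
        rintro x ⟨s, rfl⟩
        have mem : ∀ t : Fin g ⊕ Fin g, Sum.elim e₂ f₂ t ∈
            Submodule.span (ZMod 2) (Set.range (Sum.elim e₂ f₂)) :=
          fun t => Submodule.subset_span ⟨t, rfl⟩
        rcases s with k | k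
        · rcases cases3 k with hk | hk | ⟨hk1, hk2⟩
          · have hkk : e k = e₂ i + f₂ j := by
              rw [he₂i, hf₂j, hk, add_assoc, vadd_self, add_zero]
            rw [Sum.elim_inl, hkk]
            exact Submodule.add_mem _ (mem (Sum.inl i)) (mem (Sum.inr j))
          · have hkk : e k = f₂ j := by rw [hf₂j, hk]
            rw [Sum.elim_inl, hkk]; exact mem (Sum.inr j)
          · have hkk : e k = e₂ k := (E k hk1 hk2).symm
            rw [Sum.elim_inl, hkk]; exact mem (Sum.inl k)
        · rcases cases3 k with hk | hk | ⟨hk1, hk2⟩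
          · have hkk : f k = f₂ i := by rw [hf₂i, hk]
            rw [Sum.elim_inr, hkk]; exact mem (Sum.inr i)
          · have hkk : f k = e₂ j + f₂ i := by
              rw [he₂j, hf₂i, hk, add_comm (f i) (f j), add_assoc, vadd_self, add_zero]
            rw [Sum.elim_inr, hkk]
            exact Submodule.add_mem _ (mem (Sum.inl j)) (mem (Sum.inr i))
          · have hkk : f k = f₂ k := (F k hk1 hk2).symm
            rw [Sum.elim_inr, hkk]; exact mem (Sum.inr k)
    have hfilter : (Finset.univ.filter fun k => μ (e₂ k) = 1 ∧ μ (f₂ k) = 1) =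
        (Bad.erase i).erase j := by
      ext k
      simp only [Finset.mem_filter, Finset.mem_univ, true_and, Finset.mem_erase, hBad]
      rcases cases3 k with hk | hk | ⟨hk1, hk2⟩
      · rw [hk]; simp [hμe₂i]
      · rw [hk]; simp [hμe₂j]
      · rw [E k hk1 hk2, F k hk1 hk2]
        simp only [hk1, hk2, ne_eq, not_false_iff, true_and]
    have hcard₂ : (Finset.univ.filter fun k => μ (e₂ k) = 1 ∧ μ (f₂ k) = 1).card = n - 2 := by
      rw [hfilter, Finset.card_erase_of_mem (Finset.mem_erase.mpr ⟨hji, hjB⟩),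
        Finset.card_erase_of_mem hi, hcard]
      omega
    have hcast : ((n - 2 : ℕ) : ZMod 2) = 0 := by
      have h2 : ((2 : ℕ) : ZMod 2) = 0 := by decide
      rw [Nat.cast_sub hB2, hn, h2, sub_zero]
    exact ih (n - 2) (by omega) e₂ f₂ hbasis₂ hcard₂ hcast

end Key

/-- **Lemma 5.5 of the paper (algebraic form).**  Let `V` be a finite-dimensional
`𝔽₂`-vector space with a nondegenerate alternating bilinear form `b` and a quadratic
refinement `μ` of `b`.  If some symplectic basis `{eᵢ, fᵢ}` satisfies
`∑ᵢ μ(eᵢ)μ(fᵢ) = 0` (vanishing Arf invariant), then there is a symplectic basis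
`{eᵢ', fᵢ'}` with `μ(eᵢ') = 0` for all `i`. -/
theorem exists_symplectic_basis_mu_zero
    (V : Type*) [AddCommGroup V] [Module (ZMod 2) V] [FiniteDimensional (ZMod 2) V]
    (b : V →ₗ[ZMod 2] V →ₗ[ZMod 2] ZMod 2)
    (halt : ∀ x, b x x = 0)
    (hnd : Function.Injective fun x => b x)
    (μ : V → ZMod 2)
    (hμ : ∀ x y, μ (x + y) = μ x + μ y + b x y)
    (g : ℕ) (e f : Fin g → V)
    (hbasis : IsSymplecticBasis b g e f)
    (harf : ∑ i, μ (e i) * μ (f i) = 0) :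
    ∃ e' f' : Fin g → V, IsSymplecticBasis b g e' f' ∧ ∀ i, μ (e' i) = 0 := by
  classical
  have term : ∀ x y : ZMod 2, x * y = if (x = 1 ∧ y = 1) then 1 else 0 := by decide
  have harf' : (((Finset.univ.filter fun k => μ (e k) = 1 ∧ μ (f k) = 1).card : ℕ) :
      ZMod 2) = 0 := by
    rw [← Finset.sum_boole]
    rw [show (∑ i, (if (μ (e i) = 1 ∧ μ (f i) = 1) then (1 : ZMod 2) else 0)) =
        ∑ i, μ (e i) * μ (f i) from Finset.sum_congr rfl fun i _ => (term _ _).symm]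
    exact harf
  exact key halt hμ _ e f hbasis rfl harf'
end

section
/- Let V be a finite-dimensional vector space over the field 𝔽₂ with two elements, equipped with a nondegenerate alternating bilinear form b, and let μ : V → 𝔽₂ be a quadratic refinement of b. Then the element Σᵢ μ(eᵢ)μ(fᵢ) ∈ 𝔽₂ is independent of the choice of symplectic basis e₁, …, e_g, f₁, …, f_g of V: for any two symplectic bases {eᵢ, fᵢ} and {eᵢ′, fᵢ′} one has Σᵢ μ(eᵢ)μ(fᵢ) = Σᵢ μ(eᵢ′)μ(fᵢ′). -/
lemma chi_add : ∀ a c : ZMod 2, (-1:ℤ)^((a+c).val) = (-1:ℤ)^a.val * (-1:ℤ)^c.val := by decide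

lemma chi_sum {ι : Type*} (s : Finset ι) (f : ι → ZMod 2) :
    (-1:ℤ)^((∑ i ∈ s, f i).val) = ∏ i ∈ s, (-1:ℤ)^((f i).val) := by
  classical
  induction s using Finset.cons_induction with
  | empty => simp
  | cons a s ha ih => rw [Finset.sum_cons, Finset.prod_cons, chi_add, ih]

lemma factor_sum : ∀ a d : ZMod 2,
    ∑ p : ZMod 2 × ZMod 2, (-1:ℤ)^((p.1*a + p.2*d + p.1*p.2).val)
      = 2 * (-1:ℤ)^((a*d).val) := by decide

lemma zmod2_cases : ∀ c : ZMod 2, c = 0 ∨ c = 1 := by decide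

lemma zmod2_add_eq_zero : ∀ a c : ZMod 2, a + c = 0 → a = c := by decide

lemma chi_inj : ∀ a c : ZMod 2, (-1:ℤ)^a.val = (-1:ℤ)^c.val → a = c := by decide

section Main

variable {V : Type*} [AddCommGroup V] [Module (ZMod 2) V]
variable {b : V →ₗ[ZMod 2] V →ₗ[ZMod 2] ZMod 2} {μ : V → ZMod 2}
variable (hμ : ∀ x y, μ (x + y) = μ x + μ y + b x y)

include hμ

lemma mu_zero : μ 0 = 0 := by
  have h0 := hμ 0 0
  simp only [add_zero, map_zero, LinearMap.zero_apply] at h0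
  exact (left_eq_add.mp h0)

lemma mu_smul (c : ZMod 2) (x : V) : μ (c • x) = c * μ x := by
  rcases zmod2_cases c with rfl | rfl
  · simpa using mu_zero hμ
  · simp

lemma mu_sum_orth {ι : Type*} (s : Finset ι) (v : ι → V)
    (horth : ∀ i ∈ s, ∀ j ∈ s, i ≠ j → b (v i) (v j) = 0) :
    μ (∑ i ∈ s, v i) = ∑ i ∈ s, μ (v i) := by
  classical
  induction s using Finset.cons_induction with
  | empty => simpa using mu_zero hμ
  | cons a s ha ih =>
    rw [Finset.sum_cons, Finset.sum_cons, hμ, map_sum]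
    rw [ih (fun i hi j hj hij => horth i (Finset.mem_cons_of_mem hi) j
      (Finset.mem_cons_of_mem hj) hij)]
    have hz : ∀ i ∈ s, b (v a) (v i) = 0 := fun i hi =>
      horth a (Finset.mem_cons_self a s) i (Finset.mem_cons_of_mem hi)
        (fun h => ha (h ▸ hi))
    rw [Finset.sum_eq_zero hz, add_zero]

lemma sum_chi [Fintype V] (halt : ∀ x, b x x = 0)
    (g : ℕ) (e f : Fin g → V) (h : IsSymplecticBasis b g e f) :
    ∑ v : V, (-1:ℤ)^((μ v).val)
      = 2^g * (-1:ℤ)^((∑ i, μ (e i) * μ (f i)).val) := by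
  classical
  obtain ⟨hee, hff, hef, B, hBe, hBf⟩ := h
  have hsymm : ∀ x y, b x y = b y x := by
    intro x y
    have h0 := halt (x + y)
    simp only [map_add, LinearMap.add_apply, halt, zero_add, add_zero] at h0
    exact (zmod2_add_eq_zero _ _ h0).symm
  have hfe : ∀ i j, i ≠ j → b (f i) (e j) = 0 := fun i j hij => by
    rw [hsymm, hef, if_neg (Ne.symm hij)]
  -- parametrization of V by coordinates
  let q : (Fin g → ZMod 2 × ZMod 2) ≃ ((Fin g ⊕ Fin g) → ZMod 2) :=
  { toFun := fun c => Sum.elim (fun i => (c i).1) (fun i => (c i).2)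
    invFun := fun d i => (d (Sum.inl i), d (Sum.inr i))
    left_inv := fun c => rfl
    right_inv := fun d => funext fun k => by cases k <;> rfl }
  let E : (Fin g → ZMod 2 × ZMod 2) ≃ V := q.trans B.equivFun.symm.toEquiv
  have hE : ∀ c, E c = ∑ i, ((c i).1 • e i + (c i).2 • f i) := by
    intro c
    show B.equivFun.symm (q c) = _
    rw [Module.Basis.equivFun_symm_apply, Fintype.sum_sum_type, ← Finset.sum_add_distrib]
    refine Finset.sum_congr rfl fun i _ => ?_
    simp only [q, Equiv.coe_fn_mk, Sum.elim_inl, Sum.elim_inr, hBe, hBf]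
    rfl
  have hmuE : ∀ c, μ (E c) = ∑ i,
      ((c i).1 * μ (e i) + (c i).2 * μ (f i) + (c i).1 * (c i).2) := by
    intro c
    rw [hE, mu_sum_orth hμ]
    · refine Finset.sum_congr rfl fun i _ => ?_
      rw [hμ, mu_smul hμ, mu_smul hμ]
      simp only [map_smul, LinearMap.map_smul₂, LinearMap.smul_apply, smul_eq_mul, hef,
        eq_self_iff_true, if_true, mul_one]
      ring
    · intro i _ j _ hij
      simp only [map_add, map_smul, LinearMap.add_apply, LinearMap.smul_apply,
        smul_eq_mul, hee, hff, hef, hfe i j hij, if_neg hij, mul_zero, add_zero, zero_add]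
  rw [← E.sum_comp (fun v => (-1:ℤ)^((μ v).val))]
  calc ∑ c, (-1:ℤ)^((μ (E c)).val)
      = ∑ c : Fin g → ZMod 2 × ZMod 2, ∏ i,
          (-1:ℤ)^(((c i).1 * μ (e i) + (c i).2 * μ (f i) + (c i).1 * (c i).2).val) := by
        refine Finset.sum_congr rfl fun c _ => ?_
        rw [hmuE, chi_sum]
    _ = ∏ i, ∑ p : ZMod 2 × ZMod 2,
          (-1:ℤ)^((p.1 * μ (e i) + p.2 * μ (f i) + p.1*p.2).val) := by
        rw [show (Finset.univ : Finset (Fin g → ZMod 2 × ZMod 2))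
            = Fintype.piFinset (fun _ => Finset.univ) from (Fintype.piFinset_univ).symm]
        exact (Finset.prod_univ_sum (fun _ => (Finset.univ : Finset (ZMod 2 × ZMod 2)))
          (fun i p => (-1:ℤ)^((p.1 * μ (e i) + p.2 * μ (f i) + p.1*p.2).val))).symm
    _ = ∏ i, (2 * (-1:ℤ)^((μ (e i) * μ (f i)).val)) :=
        Finset.prod_congr rfl fun i _ => factor_sum _ _
    _ = 2^g * (-1:ℤ)^((∑ i, μ (e i) * μ (f i)).val) := by
        rw [Finset.prod_mul_distrib, Finset.prod_const, Finset.card_univ,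
          Fintype.card_fin, ← chi_sum]

end Main


/-- **Well-definedness of the Arf invariant** (underlying Definition 5.4 of the paper).
Let `V` be a finite-dimensional `𝔽₂`-vector space with a nondegenerate alternating bilinear
form `b` and a quadratic refinement `μ` of `b`.  Then `∑ᵢ μ(eᵢ)μ(fᵢ) ∈ 𝔽₂` does not depend
on the choice of symplectic basis `{eᵢ, fᵢ}` of `V`. -/
theorem arf_well_defined
    (V : Type*) [AddCommGroup V] [Module (ZMod 2) V] [FiniteDimensional (ZMod 2) V]
    (b : V →ₗ[ZMod 2] V →ₗ[ZMod 2] ZMod 2)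
    (halt : ∀ x, b x x = 0)
    (hnd : Function.Injective fun x => b x)
    (μ : V → ZMod 2)
    (hμ : ∀ x y, μ (x + y) = μ x + μ y + b x y)
    (g g' : ℕ) (e f : Fin g → V) (e' f' : Fin g' → V)
    (h1 : IsSymplecticBasis b g e f) (h2 : IsSymplecticBasis b g' e' f') :
    ∑ i, μ (e i) * μ (f i) = ∑ i, μ (e' i) * μ (f' i) := by

  classical
  obtain ⟨B1, _, _⟩ := h1.2.2.2
  haveI : Fintype V := Module.fintypeOfFintype B1
  have hg := sum_chi hμ halt g e f h1
  have hg' := sum_chi hμ halt g' e' f' h2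
  obtain ⟨_, _, _, B2, _⟩ := h2
  have r1 := Module.finrank_eq_card_basis B1
  have r2 := Module.finrank_eq_card_basis B2
  rw [Fintype.card_sum, Fintype.card_fin] at r1 r2
  have hgg : g = g' := by omega
  subst hgg
  rw [hg] at hg'
  exact chi_inj _ _ (mul_left_cancel₀ (pow_ne_zero g two_ne_zero) hg')
end
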